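/- Let p ≥ 2 be an integer, let f_ref, f_k, f_{k+1} be real numbers with f_ref ≤ f_{k+1}, let G ≥ 0 be a real number (representing ‖g(x_{k+1})‖), and let κ > 0, ζ > 0. Suppose that G² ≥ κ(f_{k+1} − f_ref) ≥ 0 (i.e., x_{k+1} lies in subregion R_1^2), that f_k − f_{k+1} ≥ G^{(p+1)/p}/ζ, and that f_k − f_ref < (κ^{p+1}/ζ^{2p})^{1/(p−1)}. Then the objective gap decreases at a superlinear rate: f_{k+1} − f_ref ≤ ((f_k − f_ref) / (κ^{p+1}/ζ^{2p})^{1/(p−1)})^{(p−1)/(p+1)} · (f_k − f_ref). -/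

import Mathlib

/-- Theorem 6.1(a), second case: superlinear decrease of the objective gap when
`x_{k+1} ∈ R_1^2` and `f_k − f_ref < (κ^{p+1}/ζ^{2p})^{1/(p−1)}`. -/
theorem rc_regionp_sub2_superlinear
    (p : ℕ) (hp : 2 ≤ p)
    (f_ref f_k f_k1 G κ ζ : ℝ)
    (href : f_ref ≤ f_k1)
    (hG : 0 ≤ G) (hκ : 0 < κ) (hζ : 0 < ζ)
    (h1 : G ^ 2 ≥ κ * (f_k1 - f_ref)) (h2 : κ * (f_k1 - f_ref) ≥ 0)
    (hdec : f_k - f_k1 ≥ G ^ (((p : ℝ) + 1) / p) / ζ)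
    (hsmall : f_k - f_ref < (κ ^ (p + 1) / ζ ^ (2 * p)) ^ ((1 : ℝ) / ((p : ℝ) - 1))) :
    f_k1 - f_ref ≤
      ((f_k - f_ref) / (κ ^ (p + 1) / ζ ^ (2 * p)) ^ ((1 : ℝ) / ((p : ℝ) - 1))) ^
          (((p : ℝ) - 1) / ((p : ℝ) + 1)) * (f_k - f_ref) := by
  have hq2 : (2:ℝ) ≤ (p:ℝ) := by exact_mod_cast hp
  set q : ℝ := (p:ℝ) with hqdef
  have hqm1 : 0 < q - 1 := by linarith
  have hqp1 : 0 < q + 1 := by linarith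
  have hq0 : 0 < q := by linarith
  have hΔ0 : 0 ≤ f_k1 - f_ref := by linarith
  have hGe : 0 ≤ G ^ ((q+1)/q) := Real.rpow_nonneg hG _
  have hDΔ : f_k1 - f_ref ≤ f_k - f_ref := by
    have h := div_nonneg hGe hζ.le
    linarith
  have hD0 : 0 ≤ f_k - f_ref := le_trans hΔ0 hDΔ
  set Δ := f_k1 - f_ref with hΔdef
  set D := f_k - f_ref with hDdef
  have h3 : G ^ ((q+1)/q) ≤ ζ * D := by
    rw [ge_iff_le, div_le_iff₀ hζ] at hdec
    nlinarith
  set r : ℝ := 2*q/(q+1) with hr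
  have hr0 : 0 < r := by positivity
  have hζD0 : 0 ≤ ζ * D := mul_nonneg hζ.le hD0
  have h4 : (G ^ ((q+1)/q)) ^ r ≤ (ζ*D) ^ r := Real.rpow_le_rpow hGe h3 hr0.le
  rw [← Real.rpow_natCast G 2] at h1
  have hexp : (q+1)/q * r = ((2:ℕ):ℝ) := by
    push_cast
    field_simp [hr]
    rw [hr]; field_simp
  rw [← Real.rpow_mul hG, hexp] at h4
  have hκΔ : κ * Δ ≤ (ζ*D) ^ r := le_trans h1 h4
  rw [Real.mul_rpow hζ.le hD0] at hκΔ
  -- Simplify the RHS of the goal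
  set B : ℝ := κ ^ (p + 1) / ζ ^ (2 * p) with hB
  have hB0 : 0 < B := by positivity
  set C : ℝ := B ^ ((1:ℝ)/(q-1)) with hC
  have hC0 : 0 < C := Real.rpow_pos_of_pos hB0 _
  set s : ℝ := (q-1)/(q+1) with hs
  have hCs : C ^ s = κ / ζ ^ r := by
    rw [hC, ← Real.rpow_mul hB0.le]
    have he1 : (1:ℝ)/(q-1) * s = 1/(q+1) := by
      rw [hs]; field_simp
    rw [he1, hB, Real.div_rpow (by positivity) (by positivity),
      ← Real.rpow_natCast κ (p+1), ← Real.rpow_natCast ζ (2*p),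
      ← Real.rpow_mul hκ.le, ← Real.rpow_mul hζ.le]
    have he2 : ((p+1:ℕ):ℝ) * (1/(q+1)) = 1 := by
      push_cast [← hqdef]; field_simp
    have he3 : ((2*p:ℕ):ℝ) * (1/(q+1)) = r := by
      push_cast [← hqdef]; rw [hr]; ring
    rw [he2, he3, Real.rpow_one]
  rw [Real.div_rpow hD0 hC0.le, hCs]
  rcases eq_or_lt_of_le hD0 with hDz | hDpos
  · have hΔz : Δ = 0 := le_antisymm (hDz ▸ hDΔ) hΔ0
    rw [hΔz, ← hDz]
    positivity
  · have hsr : s + 1 = r := by rw [hs, hr]; field_simp; ring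
    have hDsD : D ^ s * D = D ^ r := by
      rw [← hsr, Real.rpow_add_one (ne_of_gt hDpos)]
    have heq : D ^ s / (κ / ζ ^ r) * D = ζ ^ r * (D ^ s * D) / κ := by
      field_simp
    rw [heq, hDsD, le_div_iff₀ hκ]
    nlinarith [hκΔ]
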